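/- Let G = (V,E) be a finite simple graph, let S ⊆ V be an independent set with |S| = k ≥ 1, and suppose every vertex v ∈ V∖S has more than k/3 neighbors in S. Let H be a real inner product space, let x : V → H be a feasible C-SDP solution for G, and let u ∈ V be such that |{v ∈ S : ‖x_u − x_v‖² < 1/2}| ≥ (2/3)·k. Define B := {v ∈ V : ‖x_u − x_v‖² < 1/2}. Then B ⊆ S, and moreover S = {v ∈ V : v has no G-neighbor in B}. -/

import Mathlib

open Finset
open scoped Classical

/-- A feasible solution to the crude SDP: unit vectors, pairwise nonnegative inner
products, and orthogonal vectors on edges. -/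
def Feasible {V : Type*} {H : Type*} [NormedAddCommGroup H] [InnerProductSpace ℝ H]
    (G : SimpleGraph V) (x : V → H) : Prop :=
  (∀ v, ‖x v‖ = 1) ∧ (∀ u v : V, (0 : ℝ) ≤ inner ℝ (x u) (x v)) ∧
    (∀ u v : V, G.Adj u v → (inner ℝ (x u) (x v) : ℝ) = 0)

lemma key_aux {H : Type*} [NormedAddCommGroup H] [InnerProductSpace ℝ H]
    (a b c : H) (ha : ‖a‖ = 1) (hb : ‖b‖ = 1) (hc : ‖c‖ = 1)
    (hab : (3/4 : ℝ) < inner ℝ a b) (hac : (3/4 : ℝ) < inner ℝ a c)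
    (hbc : (inner ℝ b c : ℝ) = 0) : False := by
  have h1 : (inner ℝ a (b + c) : ℝ) ≤ ‖a‖ * ‖b + c‖ := real_inner_le_norm a (b + c)
  have h2 : ‖b + c‖ ^ 2 = 2 := by
    rw [norm_add_sq_real, hb, hc, hbc]; ring
  have h3 : (inner ℝ a (b + c) : ℝ) = inner ℝ a b + inner ℝ a c := inner_add_right _ _ _
  nlinarith [norm_nonneg (b + c)]

theorem stmt10 {V : Type*} [Fintype V] [DecidableEq V] (G : SimpleGraph V)
    (k : ℕ) (S : Finset V) (hk : S.card = k) (hk1 : 1 ≤ k)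
    (hind : ∀ u ∈ S, ∀ v ∈ S, ¬ G.Adj u v)
    (hdeg : ∀ v, v ∉ S → (k : ℝ) / 3 < ((S.filter fun w => G.Adj v w).card : ℝ))
    {H : Type*} [NormedAddCommGroup H] [InnerProductSpace ℝ H]
    (x : V → H) (hfeas : Feasible G x)
    (u : V)
    (hu : (2 / 3 : ℝ) * k ≤ ((S.filter fun v => ‖x u - x v‖ ^ 2 < 1 / 2).card : ℝ)) :
    (Finset.univ.filter fun v => ‖x u - x v‖ ^ 2 < 1 / 2) ⊆ S ∧
      S = Finset.univ.filter fun v =>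
        ∀ w, ‖x u - x w‖ ^ 2 < 1 / 2 → ¬ G.Adj v w := by
  obtain ⟨hunit, hnonneg, horth⟩ := hfeas
  -- the ball condition is equivalent to an inner product bound
  have hball : ∀ v : V, ‖x u - x v‖ ^ 2 < 1 / 2 ↔ (3/4 : ℝ) < inner ℝ (x u) (x v) := by
    intro v
    rw [norm_sub_sq_real, hunit u, hunit v]
    constructor <;> intro h <;> nlinarith
  set T := S.filter fun v => ‖x u - x v‖ ^ 2 < 1 / 2 with hT
  -- counting lemmas
  have hTS : T ⊆ S := filter_subset _ _
  have hTcard : (2 / 3 : ℝ) * k ≤ (T.card : ℝ) := hu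
  have hBsubS : ∀ v : V, ‖x u - x v‖ ^ 2 < 1 / 2 → v ∈ S := by
    intro v hv
    by_contra hvS
    have hN := hdeg v hvS
    set N := S.filter fun w => G.Adj v w with hN'
    have hNS : N ⊆ S := filter_subset _ _
    -- N and T intersect
    have hsum : (k : ℝ) < (N.card : ℝ) + (T.card : ℝ) := by nlinarith
    have hsum' : S.card < N.card + T.card := by
      rw [hk]; exact_mod_cast hsum
    have hinter : (N ∩ T).Nonempty := by
      rw [← Finset.card_pos]
      have h1 : (N ∪ T).card ≤ S.card := Finset.card_le_card (Finset.union_subset hNS hTS)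
      have h2 := Finset.card_union_add_card_inter N T
      omega
    obtain ⟨w, hw⟩ := hinter
    rw [Finset.mem_inter, hN', hT, Finset.mem_filter, Finset.mem_filter] at hw
    exact key_aux (x u) (x v) (x w) (hunit u) (hunit v) (hunit w)
      ((hball v).1 hv) ((hball w).1 hw.2.2) (horth v w hw.1.2)
  constructor
  · intro v hv
    rw [Finset.mem_filter] at hv
    exact hBsubS v hv.2
  · ext v
    simp only [Finset.mem_filter, Finset.mem_univ, true_and]
    constructor
    · intro hvS w hw hadj
      exact hind v hvS w (hBsubS w hw) hadj
    · intro h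
      by_contra hvS
      have hN := hdeg v hvS
      set N := S.filter fun w => G.Adj v w with hN'
      have hNS : N ⊆ S := filter_subset _ _
      have hdisj : Disjoint N T := by
        rw [Finset.disjoint_left]
        intro w hwN hwT
        rw [hN', Finset.mem_filter] at hwN
        rw [hT, Finset.mem_filter] at hwT
        exact h w hwT.2 hwN.2
      have h1 : (N ∪ T).card ≤ S.card := Finset.card_le_card (Finset.union_subset hNS hTS)
      have h2 : (N ∪ T).card = N.card + T.card := Finset.card_union_of_disjoint hdisj
      have hsum : (k : ℝ) < (N.card : ℝ) + (T.card : ℝ) := by nlinarith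
      have : S.card < N.card + T.card := by rw [hk]; exact_mod_cast hsum
      omega
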